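/- Stability of kernel generators under the section (the paper's Lemma: 'for any n ≥ 0, p_α^n maps ℂ[[Λ^{1/2}]]_{(α)} · y_α^{(1)} into ℂ[[Λ^{1/2}]]_{(α)} · y_α^{(n+1)}'): let a ∈ G with a ≠ 0 and n ∈ ℕ. For every a-finite g : G → ℂ there exists an a-finite g' : G → ℂ such that p_a^n (g ⋆_a c_1) = g' ⋆_a c_{n+1}, where p_a^n denotes the n-fold iterate of p_a. -/

import Mathlib

/-- The lattice `ℤ^d`, modeling the lattice `Λ^{1/2}` of half-weights. -/
abbrev Glat (d : ℕ) : Type := Fin d → ℤ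

/-- Multiplication by `d_{α,-} = α^{-1/2} - α^{1/2}` on unbounded Laurent series,
modeled as the operator `(t_a f) x = f (x + a) - f (x - a)`. -/
def ta {d : ℕ} (a : Glat d) (f : Glat d → ℂ) : Glat d → ℂ :=
  fun x => f (x + a) - f (x - a)

/-- The standard inner product on `ℤ^d`. -/
def innerZ {d : ℕ} (x y : Glat d) : ℤ := ∑ i, x i * y i

/-- The nonnegative part `m⁺` of an unbounded Laurent series `m` with respect to `a`. -/
def mplus {d : ℕ} (a : Glat d) (m : Glat d → ℂ) (x : Glat d) : ℂ :=
  if 0 ≤ innerZ x a then m x else 0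

/-- The negative part `m⁻ = m - m⁺`. -/
def mminus {d : ℕ} (a : Glat d) (m : Glat d → ℂ) (x : Glat d) : ℂ :=
  m x - mplus a m x

/-- The section `p_a m x = Σ_{k∈ℕ} m⁺ (x - (2k+1)•a) - Σ_{k∈ℕ} m⁻ (x + (2k+1)•a)`. -/
noncomputable def pa {d : ℕ} (a : Glat d) (m : Glat d → ℂ) : Glat d → ℂ :=
  fun x =>
    (∑' k : ℕ, mplus a m (x - (2 * k + 1) • a)) - ∑' k : ℕ, mminus a m (x + (2 * k + 1) • a)

/-- The coefficient sequence `c_n` of the series `y_α^{(n)}` in powers of `α^{1/2}`: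
for `n ≥ 1`, `c_n (2k+n) = choose (n-1+k) (n-1)` and
`c_n (-(2k+n)) = (-1)^{n+1} * choose (n-1+k) (n-1)` for `k ∈ ℕ`, `0` elsewhere; `c_0 = 0`. -/
def cseq (n : ℕ) (m : ℤ) : ℤ :=
  if n = 0 then 0
  else if (n : ℤ) ≤ m ∧ (m - (n : ℤ)) % 2 = 0 then
    ((n - 1 + ((m - (n : ℤ)) / 2).toNat).choose (n - 1) : ℤ)
  else if m ≤ -(n : ℤ) ∧ (m + (n : ℤ)) % 2 = 0 then
    (-1) ^ (n + 1) * ((n - 1 + ((-m - (n : ℤ)) / 2).toNat).choose (n - 1) : ℤ)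
  else 0

/-- `g : ℤ^d → ℂ` is `a`-finite if along every coset of `ℤ•a` it has finite support. -/
def AFinite {d : ℕ} (a : Glat d) (g : Glat d → ℂ) : Prop :=
  ∀ x : Glat d, {m : ℤ | g (x + m • a) ≠ 0}.Finite

/-- Convolution `(g ⋆_a c) x = Σ_{m ∈ ℤ} g (x - m•a) * c m`; for `a`-finite `g`
only finitely many terms are nonzero. -/
noncomputable def conv {d : ℕ} (a : Glat d) (g : Glat d → ℂ) (c : ℤ → ℤ) : Glat d → ℂ :=
  fun x => ∑' m : ℤ, g (x - m • a) * (c m : ℂ)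

/-! ### Auxiliary lemmas -/


section Inner
variable {d : ℕ}

lemma innerZ_self_pos {a : Glat d} (ha : a ≠ 0) : 0 < innerZ a a := by
  obtain ⟨i, hi⟩ : ∃ i, a i ≠ 0 := by
    by_contra h
    push_neg at h
    exact ha (funext fun i => h i)
  refine Finset.sum_pos' (fun i _ => mul_self_nonneg _) ⟨i, Finset.mem_univ i, ?_⟩
  exact mul_self_pos.mpr hi

lemma innerZ_sub_nsmul (x a : Glat d) (n : ℕ) :
    innerZ (x - n • a) a = innerZ x a - (n : ℤ) * innerZ a a := by
  simp only [innerZ, Pi.sub_apply, Pi.smul_apply, nsmul_eq_mul, Pi.mul_apply, Pi.natCast_apply, sub_mul, mul_assoc,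
    Finset.sum_sub_distrib, Finset.mul_sum]

lemma innerZ_add_nsmul (x a : Glat d) (n : ℕ) :
    innerZ (x + n • a) a = innerZ x a + (n : ℤ) * innerZ a a := by
  simp only [innerZ, Pi.add_apply, Pi.smul_apply, nsmul_eq_mul, Pi.mul_apply, Pi.natCast_apply, add_mul, mul_assoc,
    Finset.sum_add_distrib, Finset.mul_sum]

lemma zsmul_eq_zero_iff {a : Glat d} (ha : a ≠ 0) {k : ℤ} (h : k • a = 0) : k = 0 := by
  obtain ⟨i, hi⟩ : ∃ i, a i ≠ 0 := by
    by_contra hc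
    push_neg at hc
    exact ha (funext fun i => hc i)
  have := congrFun h i
  simp only [Pi.smul_apply, smul_eq_mul, Pi.zero_apply, mul_eq_zero] at this
  tauto

lemma zsmul_cancel {a : Glat d} (ha : a ≠ 0) {k l : ℤ} (h : k • a = l • a) : k = l := by
  have : (k - l) • a = 0 := by rw [sub_smul, h, sub_self]
  have := zsmul_eq_zero_iff ha this
  omega

end Inner

/-! ### Summability helpers -/

section Summ
variable {d : ℕ} {a : Glat d} {g : Glat d → ℂ}

lemma summable_conv (hg : AFinite a g) (x : Glat d) (c : ℤ → ℂ) :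
    Summable fun m : ℤ => g (x - m • a) * c m := by
  apply summable_of_finite_support
  have hsub : (Function.support fun m : ℤ => g (x - m • a) * c m) ⊆
      (fun m : ℤ => -m) ⁻¹' {m : ℤ | g (x + m • a) ≠ 0} := by
    intro m hm
    simp only [Function.mem_support, ne_eq] at hm
    simp only [Set.mem_preimage, Set.mem_setOf_eq, neg_smul, ← sub_eq_add_neg]
    intro h0
    exact hm (by rw [h0, zero_mul])
  exact ((hg x).preimage (Set.injOn_of_injective neg_injective)).subset hsub

lemma summable_conv' (hg : AFinite a g) (x : Glat d) (t : ℤ) (c : ℤ → ℂ) :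
    Summable fun m : ℤ => g (x - (m + t) • a) * c m := by
  apply summable_of_finite_support
  have hinj : Function.Injective fun m : ℤ => -(m + t) := fun u v h => by
    simp only at h; omega
  have hsub : (Function.support fun m : ℤ => g (x - (m + t) • a) * c m) ⊆
      (fun m : ℤ => -(m + t)) ⁻¹' {m : ℤ | g (x + m • a) ≠ 0} := by
    intro m hm
    simp only [Function.mem_support, ne_eq] at hm
    simp only [Set.mem_preimage, Set.mem_setOf_eq, neg_smul, ← sub_eq_add_neg]
    intro h0
    exact hm (by rw [h0, zero_mul])
  exact ((hg x).preimage (Set.injOn_of_injective hinj)).subset hsub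

end Summ

/-! ### ta on convolutions -/

section TaConv
variable {d : ℕ} {a : Glat d} {g : Glat d → ℂ}

lemma point1 (x a : Glat d) (m : ℤ) : x + a - (m + 1) • a = x - m • a := by
  rw [add_smul, one_smul]; abel

lemma point2 (x a : Glat d) (m : ℤ) : x - a - (m - 1) • a = x - m • a := by
  rw [sub_smul, one_smul]; abel

lemma ta_conv (hg : AFinite a g) (c c' : ℤ → ℤ)
    (hcc : ∀ m, c (m + 1) - c (m - 1) = c' m) :
    ta a (conv a g c) = conv a g c' := by
  funext x
  have s1 : Summable fun m : ℤ => g (x - m • a) * ((c (m + 1) : ℤ) : ℂ) :=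
    summable_conv hg x _
  have s2 : Summable fun m : ℤ => g (x - m • a) * ((c (m - 1) : ℤ) : ℂ) :=
    summable_conv hg x _
  have e1 : (∑' m : ℤ, g (x + a - m • a) * (c m : ℂ))
      = ∑' m : ℤ, g (x - m • a) * ((c (m + 1) : ℤ) : ℂ) := by
    rw [← (Equiv.addRight (1 : ℤ)).tsum_eq (fun m => g (x + a - m • a) * (c m : ℂ))]
    exact tsum_congr fun m => by rw [Equiv.coe_addRight, point1]
  have e2 : (∑' m : ℤ, g (x - a - m • a) * (c m : ℂ))
      = ∑' m : ℤ, g (x - m • a) * ((c (m - 1) : ℤ) : ℂ) := by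
    rw [← (Equiv.subRight (1 : ℤ)).tsum_eq (fun m => g (x - a - m • a) * (c m : ℂ))]
    exact tsum_congr fun m => by rw [Equiv.subRight_apply, point2]
  show (∑' m : ℤ, g (x + a - m • a) * (c m : ℂ)) - (∑' m : ℤ, g (x - a - m • a) * (c m : ℂ))
      = ∑' m : ℤ, g (x - m • a) * (c' m : ℂ)
  rw [e1, e2, ← Summable.tsum_sub s1 s2]
  refine tsum_congr fun m => ?_
  rw [← mul_sub]
  congr 1
  rw [← hcc m]
  push_cast
  ring

end TaConv

/-! ### ta ∘ pa = id -/

section TaPa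
variable {d : ℕ} {a : Glat d}

lemma pt_a (x a : Glat d) (k : ℕ) : x + a - (2 * k + 1) • a = x - (2 * k) • a := by
  funext i
  simp only [Pi.add_apply, Pi.sub_apply, Pi.smul_apply, Pi.mul_apply, Pi.natCast_apply,
    Pi.one_apply, Pi.ofNat_apply, nsmul_eq_mul]
  push_cast
  ring

lemma pt_c (x a : Glat d) (k : ℕ) : x - a - (2 * k + 1) • a = x - (2 * (k + 1)) • a := by
  funext i
  simp only [Pi.add_apply, Pi.sub_apply, Pi.smul_apply, Pi.mul_apply, Pi.natCast_apply,
    Pi.one_apply, Pi.ofNat_apply, nsmul_eq_mul]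
  push_cast
  ring

lemma pt_b (x a : Glat d) (k : ℕ) : x + a + (2 * k + 1) • a = x + (2 * (k + 1)) • a := by
  funext i
  simp only [Pi.add_apply, Pi.sub_apply, Pi.smul_apply, Pi.mul_apply, Pi.natCast_apply,
    Pi.one_apply, Pi.ofNat_apply, nsmul_eq_mul]
  push_cast
  ring

lemma pt_d (x a : Glat d) (k : ℕ) : x - a + (2 * k + 1) • a = x + (2 * k) • a := by
  funext i
  simp only [Pi.add_apply, Pi.sub_apply, Pi.smul_apply, Pi.mul_apply, Pi.natCast_apply,
    Pi.one_apply, Pi.ofNat_apply, nsmul_eq_mul]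
  push_cast
  ring

lemma ta_pa (ha : a ≠ 0) (m : Glat d → ℂ) : ta a (pa a m) = m := by
  funext x
  have hs : 1 ≤ innerZ a a := innerZ_self_pos ha
  set F : ℕ → ℂ := fun k => mplus a m (x - (2 * k) • a) with hF
  set G : ℕ → ℂ := fun k => mminus a m (x + (2 * k) • a) with hG
  have sF : Summable F := by
    apply summable_of_ne_finset_zero (s := Finset.range ((innerZ x a).toNat + 1))
    intro k hk
    have hk' : (innerZ x a).toNat + 1 ≤ k := by
      by_contra h
      exact hk (Finset.mem_range.mpr (by omega))
    have h1 : innerZ x a < (k : ℤ) := by omega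
    have h2 : innerZ (x - (2 * k) • a) a < 0 := by
      rw [innerZ_sub_nsmul]
      push_cast
      nlinarith [Int.ofNat_nonneg k]
    rw [hF]
    simp only [mplus, if_neg (by omega : ¬ (0 ≤ innerZ (x - (2 * k) • a) a))]
  have sG : Summable G := by
    apply summable_of_ne_finset_zero (s := Finset.range ((-innerZ x a).toNat + 1))
    intro k hk
    have hk' : (-innerZ x a).toNat + 1 ≤ k := by
      by_contra h
      exact hk (Finset.mem_range.mpr (by omega))
    have h1 : -innerZ x a < (k : ℤ) := by omega
    have h2 : 0 ≤ innerZ (x + (2 * k) • a) a := by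
      rw [innerZ_add_nsmul]
      push_cast
      nlinarith [Int.ofNat_nonneg k]
    rw [hG]
    simp only [mminus, mplus, if_pos h2, sub_self]
  have eA : (∑' k : ℕ, mplus a m (x + a - (2 * k + 1) • a)) = ∑' k : ℕ, F k :=
    tsum_congr fun k => congrArg (mplus a m) (pt_a x a k)
  have eC : (∑' k : ℕ, mplus a m (x - a - (2 * k + 1) • a)) = ∑' k : ℕ, F (k + 1) :=
    tsum_congr fun k => congrArg (mplus a m) (pt_c x a k)
  have eB : (∑' k : ℕ, mminus a m (x + a + (2 * k + 1) • a)) = ∑' k : ℕ, G (k + 1) :=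
    tsum_congr fun k => congrArg (mminus a m) (pt_b x a k)
  have eD : (∑' k : ℕ, mminus a m (x - a + (2 * k + 1) • a)) = ∑' k : ℕ, G k :=
    tsum_congr fun k => congrArg (mminus a m) (pt_d x a k)
  have hFs : ∑' k : ℕ, F k = F 0 + ∑' k : ℕ, F (k + 1) := Summable.tsum_eq_zero_add sF
  have hGs : ∑' k : ℕ, G k = G 0 + ∑' k : ℕ, G (k + 1) := Summable.tsum_eq_zero_add sG
  have hF0 : F 0 = mplus a m x := by
    rw [hF]
    norm_num
  have hG0 : G 0 = mminus a m x := by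
    rw [hG]
    norm_num
  show pa a m (x + a) - pa a m (x - a) = m x
  simp only [pa]
  rw [eA, eB, eC, eD, hFs, hGs, hF0, hG0]
  simp only [mminus]
  ring

/-! ### cseq lemmas -/


lemma cseq_pos (n k : ℕ) : cseq (n + 1) ((n + 1 : ℤ) + 2 * k) = ((n + k).choose n : ℤ) := by
  have h1 : ((n:ℤ) + 1 + 2 * k - (n + 1)) % 2 = 0 := by omega
  have h2 : (((n:ℤ) + 1 + 2 * k - (n + 1)) / 2).toNat = k := by omega
  simp only [cseq, Nat.add_sub_cancel]
  rw [if_neg (by omega), if_pos]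
  · push_cast; rw [h2]
  · constructor
    · push_cast; omega
    · push_cast at h1 ⊢; omega

lemma cseq_neg (n k : ℕ) :
    cseq (n + 1) (-((n + 1 : ℤ) + 2 * k)) = (-1) ^ n * ((n + k).choose n : ℤ) := by
  simp only [cseq, Nat.add_sub_cancel]
  rw [if_neg (by omega), if_neg (by push_cast; omega), if_pos (by push_cast; omega)]
  have h2 : ((-(-((n:ℤ) + 1 + 2 * k)) - (n + 1)) / 2).toNat = k := by omega
  push_cast
  rw [h2, pow_succ]
  ring

lemma cseq_zero_mid (n : ℕ) (m : ℤ)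
    (h : (¬ ((n + 1 : ℤ) ≤ m ∧ (m - (n + 1 : ℤ)) % 2 = 0)) ∧
         (¬ (m ≤ -(n + 1 : ℤ) ∧ (m + (n + 1 : ℤ)) % 2 = 0))) : cseq (n + 1) m = 0 := by
  simp only [cseq]
  rw [if_neg (by omega), if_neg (by push_cast; omega), if_neg (by push_cast; omega)]

lemma cseq_one (m : ℤ) : cseq 1 m = if m % 2 = 0 then 0 else 1 := by
  rcases (by omega : m % 2 = 0 ∨ m % 2 = 1) with h2 | h2
  · rw [if_pos h2]
    exact cseq_zero_mid 0 m (by constructor <;> push_cast <;> omega)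
  · rw [if_neg (by omega)]
    rcases le_or_gt 1 m with h | h
    · obtain ⟨k, hk⟩ : ∃ k : ℕ, m = ((0:ℕ) + 1 : ℤ) + 2 * k := ⟨(m/2).toNat, by push_cast; omega⟩
      rw [hk]
      have := cseq_pos 0 k
      norm_num at this ⊢
      rw [this]
    · obtain ⟨k, hk⟩ : ∃ k : ℕ, m = -(((0:ℕ) + 1 : ℤ) + 2 * k) := ⟨((-m)/2).toNat, by push_cast; omega⟩
      rw [hk]
      have := cseq_neg 0 k
      norm_num at this ⊢
      rw [this]

lemma pascal' (n k : ℕ) :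
    (n + 1 + (k + 1)).choose (n + 1) = (n + 1 + k).choose (n + 1) + (n + (k + 1)).choose n := by
  rw [show n + 1 + (k + 1) = (n + k + 1) + 1 by ring, Nat.choose_succ_succ (n + k + 1) n,
    show n + k + 1 = n + 1 + k by ring, show n + (k + 1) = n + 1 + k by ring]
  ring

lemma cseq_rec (n : ℕ) (m : ℤ) :
    cseq (n + 1) (m + 1) - cseq (n + 1) (m - 1) = cseq n m := by
  rcases n with _ | n
  · rw [cseq_one, cseq_one, show (m + 1) % 2 = (m - 1) % 2 by omega, sub_self]
    simp [cseq]
  · by_cases ha : ((n : ℤ) + 1 ≤ m ∧ (m - ((n : ℤ) + 1)) % 2 = 0)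
    · obtain ⟨k, hk⟩ : ∃ k : ℕ, m = ((n : ℕ) + 1 : ℤ) + 2 * k :=
        ⟨((m - n - 1) / 2).toNat, by push_cast; omega⟩
      have h1 : m + 1 = ((n + 1 : ℕ) + 1 : ℤ) + 2 * k := by push_cast; push_cast at hk; omega
      rcases k with _ | k'
      · have h2 : cseq (n + 1 + 1) (m - 1) = 0 := by
          apply cseq_zero_mid
          push_cast at hk ⊢; omega
        rw [h1, cseq_pos (n + 1) 0, h2, hk, cseq_pos n 0]
        simp
      · have h3 : m - 1 = ((n + 1 : ℕ) + 1 : ℤ) + 2 * (k' : ℕ) := by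
          push_cast; push_cast at hk; omega
        rw [h1, cseq_pos (n + 1) (k' + 1), h3, cseq_pos (n + 1) k', hk, cseq_pos n (k' + 1)]
        have := pascal' n k'
        omega
    · by_cases hb : (m ≤ -((n : ℤ) + 1) ∧ (m + ((n : ℤ) + 1)) % 2 = 0)
      · obtain ⟨k, hk⟩ : ∃ k : ℕ, m = -(((n : ℕ) + 1 : ℤ) + 2 * k) :=
          ⟨((-m - n - 1) / 2).toNat, by push_cast; omega⟩
        have h1 : m - 1 = -(((n + 1 : ℕ) + 1 : ℤ) + 2 * k) := by push_cast; push_cast at hk; omega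
        rcases k with _ | k'
        · have h2 : cseq (n + 1 + 1) (m + 1) = 0 := by
            apply cseq_zero_mid
            push_cast at hk ⊢; omega
          rw [h2, h1, cseq_neg (n + 1) 0, hk, cseq_neg n 0]
          simp [pow_succ]
        · have h3 : m + 1 = -(((n + 1 : ℕ) + 1 : ℤ) + 2 * (k' : ℕ)) := by
            push_cast; push_cast at hk; omega
          rw [h3, cseq_neg (n + 1) k', h1, cseq_neg (n + 1) (k' + 1), hk, cseq_neg n (k' + 1)]
          have := pascal' n k'
          have hcast : ((n + 1 + (k' + 1)).choose (n + 1) : ℤ)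
              = ((n + 1 + k').choose (n + 1) : ℤ) + ((n + (k' + 1)).choose n : ℤ) := by
            exact_mod_cast congrArg (Nat.cast : ℕ → ℤ) this
          rw [pow_succ, hcast]
          ring
      · have hz : cseq (n + 1) m = 0 := cseq_zero_mid n m (by push_cast at ha hb ⊢; omega)
        have hz1 : cseq (n + 1 + 1) (m + 1) = 0 :=
          cseq_zero_mid (n + 1) (m + 1) (by push_cast at ha hb ⊢; omega)
        have hz2 : cseq (n + 1 + 1) (m - 1) = 0 :=
          cseq_zero_mid (n + 1) (m - 1) (by push_cast at ha hb ⊢; omega)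
        rw [hz, hz1, hz2]
        ring

/-! ### delta operator -/

section Delta
variable {d : ℕ} {a : Glat d} {w g f : Glat d → ℂ}

def delta {d : ℕ} (a : Glat d) (w : Glat d → ℂ) : Glat d → ℂ :=
  fun y => w y - w (y - (2 : ℤ) • a)

lemma afinite_delta (hw : AFinite a w) : AFinite a (delta a w) := by
  intro x
  have hinj : Function.Injective (fun m : ℤ => m - 2) := fun u v h => by simpa using h
  have h1 : {m : ℤ | delta a w (x + m • a) ≠ 0} ⊆
      {m : ℤ | w (x + m • a) ≠ 0} ∪ ((fun m : ℤ => m - 2) ⁻¹' {m : ℤ | w (x + m • a) ≠ 0}) := by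
    intro m hm
    simp only [Set.mem_setOf_eq, delta] at hm
    by_contra hc
    simp only [Set.mem_union, Set.mem_preimage, Set.mem_setOf_eq, not_or, not_not] at hc
    apply hm
    have pt : x + m • a - (2 : ℤ) • a = x + (m - 2) • a := by rw [sub_smul]; abel
    rw [pt, hc.1, hc.2, sub_self]
  exact ((hw x).union ((hw x).preimage (Set.injOn_of_injective hinj))).subset h1

lemma afinite_delta_iter (hw : AFinite a w) (N : ℕ) : AFinite a ((delta a)^[N] w) := by
  induction N with
  | zero => exact hw
  | succ N ih => rw [Function.iterate_succ_apply']; exact afinite_delta ih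

lemma conv_delta (hw : AFinite a w) (c : ℤ → ℤ) :
    conv a (delta a w) c = conv a w (fun m => c m - c (m - 2)) := by
  funext x
  have s1 : Summable fun m : ℤ => w (x - m • a) * ((c m : ℤ) : ℂ) := summable_conv hw x _
  have s2 : Summable fun m : ℤ => w (x - (m + 2) • a) * ((c m : ℤ) : ℂ) :=
    summable_conv' hw x 2 _
  have s3 : Summable fun m : ℤ => w (x - m • a) * ((c (m - 2) : ℤ) : ℂ) := summable_conv hw x _
  have pt : ∀ m : ℤ, x - m • a - (2 : ℤ) • a = x - (m + 2) • a := fun m => by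
    rw [add_smul]; abel
  have e0 : (∑' m : ℤ, delta a w (x - m • a) * (c m : ℂ))
      = ∑' m : ℤ, (w (x - m • a) * (c m : ℂ) - w (x - (m + 2) • a) * (c m : ℂ)) :=
    tsum_congr fun m => by rw [delta]; rw [pt m, sub_mul]
  have e1 : (∑' m : ℤ, w (x - (m + 2) • a) * (c m : ℂ))
      = ∑' m : ℤ, w (x - m • a) * ((c (m - 2) : ℤ) : ℂ) := by
    rw [← (Equiv.addRight (2 : ℤ)).tsum_eq (fun m => w (x - m • a) * ((c (m - 2) : ℤ) : ℂ))]
    refine tsum_congr fun m => ?_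
    rw [Equiv.coe_addRight]
    norm_num
  show (∑' m : ℤ, delta a w (x - m • a) * (c m : ℂ))
      = ∑' m : ℤ, w (x - m • a) * (((c m - c (m - 2)) : ℤ) : ℂ)
  rw [e0, Summable.tsum_sub s1 s2, e1, ← Summable.tsum_sub s1 s3]
  exact tsum_congr fun m => by push_cast; ring

lemma conv_congr_c {c c' : ℤ → ℤ} (g : Glat d → ℂ) (h : ∀ m, c m = c' m) :
    conv a g c = conv a g c' :=
  funext fun x => tsum_congr fun m => by rw [h m]

lemma conv_delta_iter (N : ℕ) :
    ∀ (t : ℤ) (w : Glat d → ℂ), AFinite a w →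
      conv a ((delta a)^[N] w) (fun m => cseq (N + 1) (m - t))
        = conv a w (fun m => cseq 1 (m - t - N)) := by
  induction N with
  | zero =>
      intro t w hw
      simp only [Function.iterate_zero, id_eq, Nat.cast_zero, sub_zero, Nat.zero_add]
  | succ N ih =>
      intro t w hw
      rw [Function.iterate_succ_apply']
      rw [conv_delta (afinite_delta_iter hw N) _]
      have hstep : ∀ m : ℤ, cseq (N + 1 + 1) (m - t) - cseq (N + 1 + 1) (m - 2 - t)
          = cseq (N + 1) (m - (t + 1)) := by
        intro m
        have h := cseq_rec (N + 1) (m - t - 1)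
        rw [show m - t - 1 + 1 = m - t by ring, show m - t - 1 - 1 = m - 2 - t by ring] at h
        rw [h]
        congr 1
        ring
      rw [conv_congr_c _ hstep, ih (t + 1) w hw]
      refine conv_congr_c _ fun m => ?_
      congr 1
      push_cast
      ring

lemma conv_add (hg : AFinite a g) (hf : AFinite a f) (c : ℤ → ℤ) (x : Glat d) :
    conv a (fun y => g y + f y) c x = conv a g c x + conv a f c x := by
  have s1 : Summable fun m : ℤ => g (x - m • a) * ((c m : ℤ) : ℂ) := summable_conv hg x _
  have s2 : Summable fun m : ℤ => f (x - m • a) * ((c m : ℤ) : ℂ) := summable_conv hf x _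
  have key : (∑' m : ℤ, (g (x - m • a) + f (x - m • a)) * (c m : ℂ))
      = (∑' m : ℤ, g (x - m • a) * (c m : ℂ)) + ∑' m : ℤ, f (x - m • a) * (c m : ℂ) := by
    rw [← Summable.tsum_add s1 s2]
    exact tsum_congr fun m => by ring
  exact key

end Delta

/-! ### Periodic functions are convolutions -/

section Periodic
variable {d : ℕ}

lemma periodic_even {a : Glat d} {q : Glat d → ℂ}
    (hq : ∀ y, q (y + (2 : ℤ) • a) = q y) :
    ∀ (t : ℤ) (y : Glat d), q (y + (2 * t) • a) = q y := by
  intro t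
  induction t using Int.induction_on with
  | zero => intro y; norm_num
  | succ t ih =>
      intro y
      have pt : y + (2 * ((t : ℤ) + 1)) • a = (y + (2 * (t : ℤ)) • a) + (2 : ℤ) • a := by
        rw [show (2 * ((t : ℤ) + 1)) = 2 * t + 2 by ring, add_smul]
        abel
      rw [pt, hq, ih]
  | pred t ih =>
      intro y
      have pt : (y + (2 * (-(t : ℤ) - 1)) • a) + (2 : ℤ) • a = y + (2 * (-(t : ℤ))) • a := by
        rw [show (2 * (-(t : ℤ))) = 2 * (-(t : ℤ) - 1) + 2 by ring, add_smul]
        abel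
      have h2 := hq (y + (2 * (-(t : ℤ) - 1)) • a)
      rw [pt] at h2
      rw [← h2, ih]

lemma exists_conv_eq_of_periodic {a : Glat d} (ha : a ≠ 0) (q : Glat d → ℂ)
    (hq : ∀ y, q (y + (2 : ℤ) • a) = q y) (N : ℕ) :
    ∃ f : Glat d → ℂ, AFinite a f ∧ conv a f (cseq (N + 1)) = q := by
  classical
  set R : Glat d → Glat d :=
    fun y => (QuotientAddGroup.mk y : Glat d ⧸ AddSubgroup.zmultiples a).out with hRdef
  have hRcoset : ∀ y : Glat d, ∃ j : ℤ, y = R y + j • a := by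
    intro y
    have h1 : (QuotientAddGroup.mk (R y) : Glat d ⧸ AddSubgroup.zmultiples a)
        = QuotientAddGroup.mk y := QuotientAddGroup.out_eq' _
    rw [QuotientAddGroup.eq] at h1
    obtain ⟨j, hj⟩ := AddSubgroup.mem_zmultiples_iff.mp h1
    refine ⟨j, ?_⟩
    rw [hj]
    abel
  have hRshift : ∀ (y : Glat d) (m : ℤ), R (y + m • a) = R y := by
    intro y m
    have h1 : (QuotientAddGroup.mk (y + m • a) : Glat d ⧸ AddSubgroup.zmultiples a)
        = QuotientAddGroup.mk y := by
      rw [QuotientAddGroup.eq]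
      have h2 : -(y + m • a) + y = (-m) • a := by rw [neg_smul]; abel
      rw [h2]
      exact AddSubgroup.mem_zmultiples_iff.mpr ⟨-m, rfl⟩
    rw [hRdef]
    simp only
    rw [h1]
  have hRR : ∀ y : Glat d, R (R y) = R y := by
    intro y
    rw [hRdef]
    simp only
    rw [QuotientAddGroup.out_eq']
  set v : Glat d → ℂ := fun y =>
    if y = R y then q (y + ((N : ℤ) + 1) • a)
    else if y = R y + a then q (R y + (N : ℤ) • a) else 0 with hv
  have hav : AFinite a v := by
    intro x
    obtain ⟨j, hj⟩ := hRcoset x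
    have hsub : {m : ℤ | v (x + m • a) ≠ 0} ⊆ {-j, -j + 1} := by
      intro m hm
      simp only [Set.mem_setOf_eq] at hm
      by_contra hc
      simp only [Set.mem_insert_iff, Set.mem_singleton_iff, not_or] at hc
      apply hm
      have hx : x + m • a = R x + (j + m) • a := by
        rw [add_smul]
        conv_lhs => rw [hj]
        abel
      have hR1 : R (x + m • a) = R x := hRshift x m
      rw [hv]
      simp only
      rw [if_neg, if_neg]
      · intro h
        rw [hR1, hx] at h
        have : (j + m) • a = (1 : ℤ) • a := by
          rw [one_smul]
          exact add_left_cancel (h.trans rfl)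
        have := zsmul_cancel ha this
        omega
      · intro h
        rw [hR1, hx] at h
        have h0 : (j + m) • a = 0 := by
          have := add_left_cancel (h.trans (add_zero (R x)).symm)
          simpa using this
        have := zsmul_eq_zero_iff ha h0
        omega
    exact ((Set.finite_singleton _).insert _).subset hsub
  refine ⟨(delta a)^[N] v, afinite_delta_iter hav N, ?_⟩
  have hiter := conv_delta_iter (a := a) N 0 v hav
  have hc1 : (fun m : ℤ => cseq (N + 1) (m - 0)) = fun m : ℤ => cseq (N + 1) m := by
    funext m; norm_num
  rw [hc1] at hiter
  rw [show (fun m : ℤ => cseq (N + 1) m) = cseq (N + 1) from rfl] at hiter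
  rw [hiter]
  funext x
  obtain ⟨j, hj⟩ := hRcoset x
  have hpt1 : x - j • a = R x := by
    conv_lhs => rw [hj]
    abel
  have hpt2 : x - (j - 1) • a = R x + a := by
    rw [sub_smul, one_smul]
    conv_lhs => rw [hj]
    abel
  have hsupp : ∀ m ∉ ({j - 1, j} : Finset ℤ),
      v (x - m • a) * ((cseq 1 (m - 0 - N) : ℤ) : ℂ) = 0 := by
    intro m hm
    simp only [Finset.mem_insert, Finset.mem_singleton, not_or] at hm
    have hx : x - m • a = R x + (j - m) • a := by
      rw [sub_smul]
      conv_lhs => rw [hj]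
      abel
    have hR1 : R (x - m • a) = R x := by
      have : x - m • a = x + (-m) • a := by rw [neg_smul]; abel
      rw [this, hRshift]
    have hz : v (x - m • a) = 0 := by
      rw [hv]
      simp only
      rw [if_neg, if_neg]
      · intro h
        rw [hR1, hx] at h
        have : (j - m) • a = (1 : ℤ) • a := by
          rw [one_smul]
          exact add_left_cancel h
        have := zsmul_cancel ha this
        omega
      · intro h
        rw [hR1, hx] at h
        have h0 : (j - m) • a = 0 := by
          have := add_left_cancel (h.trans (add_zero (R x)).symm)
          simpa using this
        have := zsmul_eq_zero_iff ha h0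
        omega
    rw [hz, zero_mul]
  have hsum : conv a v (fun m => cseq 1 (m - 0 - N)) x
      = v (x - (j - 1) • a) * ((cseq 1 (j - 1 - 0 - N) : ℤ) : ℂ)
        + v (x - j • a) * ((cseq 1 (j - 0 - N) : ℤ) : ℂ) := by
    show (∑' m : ℤ, v (x - m • a) * ((cseq 1 (m - 0 - N) : ℤ) : ℂ)) = _
    rw [tsum_eq_sum hsupp, Finset.sum_pair (by omega : j - 1 ≠ j)]
  have hv1 : v (x - j • a) = q (R x + ((N : ℤ) + 1) • a) := by
    rw [hpt1, hv]
    simp only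
    rw [if_pos (hRR x).symm]
  have hv2 : v (x - (j - 1) • a) = q (R x + (N : ℤ) • a) := by
    rw [hpt2, hv]
    simp only
    have hRa : R (R x + a) = R x := by
      have h1 : R x + a = R x + (1 : ℤ) • a := by rw [one_smul]
      rw [h1, hRshift, hRR]
    have hcond1 : ¬ (R x + a = R (R x + a)) := by
      rw [hRa]
      intro h
      exact ha (by simpa using h)
    have hcond2 : R x + a = R (R x + a) + a := by rw [hRa]
    rw [if_neg hcond1, if_pos hcond2, hRa]
  rw [hsum, hv1, hv2]
  rcases (by omega : (j - (N : ℤ)) % 2 = 0 ∨ (j - (N : ℤ)) % 2 = 1) with hpar | hpar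
  · have c1a : cseq 1 (j - 0 - N) = 0 := by rw [cseq_one, if_pos (by omega)]
    have c1b : cseq 1 (j - 1 - 0 - N) = 1 := by rw [cseq_one, if_neg (by omega)]
    rw [c1a, c1b]
    have hx : x = (R x + (N : ℤ) • a) + (2 * ((j - N) / 2)) • a := by
      rw [show (2 * ((j - (N : ℤ)) / 2)) = j - N by omega, sub_smul]
      conv_lhs => rw [hj]
      abel
    rw [show q x = q ((R x + (N : ℤ) • a) + (2 * ((j - (N : ℤ)) / 2)) • a) from by rw [← hx]]
    rw [periodic_even hq]
    push_cast
    ring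
  · have c1a : cseq 1 (j - 0 - N) = 1 := by rw [cseq_one, if_neg (by omega)]
    have c1b : cseq 1 (j - 1 - 0 - N) = 0 := by rw [cseq_one, if_pos (by omega)]
    rw [c1a, c1b]
    have hx : x = (R x + ((N : ℤ) + 1) • a) + (2 * ((j - N - 1) / 2)) • a := by
      rw [show (2 * ((j - (N : ℤ) - 1) / 2)) = j - (N + 1) by omega, sub_smul]
      conv_lhs => rw [hj]
      abel
    rw [show q x = q ((R x + ((N : ℤ) + 1) • a) + (2 * ((j - (N : ℤ) - 1) / 2)) • a) from by
      rw [← hx]]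
    rw [periodic_even hq]
    push_cast
    ring

end Periodic


/-- Stability of kernel generators under the section: for `n ≥ 0`, `p_a^n` maps
`ℂ[[Λ^{1/2}]]_{(α)} · y_α^{(1)}` into `ℂ[[Λ^{1/2}]]_{(α)} · y_α^{(n+1)}`. -/
theorem pa_iter_maps_kernel_generators {d : ℕ} (hd : 1 ≤ d) (a : Glat d) (ha : a ≠ 0)
    (n : ℕ) (g : Glat d → ℂ) (hg : AFinite a g) :
    ∃ g' : Glat d → ℂ, AFinite a g' ∧
      (pa a)^[n] (conv a g (cseq 1)) = conv a g' (cseq (n + 1)) := by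
  induction n with
  | zero => exact ⟨g, hg, by simp⟩
  | succ n ih =>
      obtain ⟨g₁, hg₁, heq⟩ := ih
      rw [Function.iterate_succ_apply', heq]
      set h : Glat d → ℂ := pa a (conv a g₁ (cseq (n + 1))) with hh
      have hta_h : ta a h = conv a g₁ (cseq (n + 1)) := ta_pa ha _
      have hta_c : ta a (conv a g₁ (cseq (n + 1 + 1))) = conv a g₁ (cseq (n + 1)) :=
        ta_conv hg₁ _ _ (cseq_rec (n + 1))
      set q : Glat d → ℂ := fun y => h y - conv a g₁ (cseq (n + 1 + 1)) y with hqdef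
      have hqper : ∀ y, q (y + (2 : ℤ) • a) = q y := by
        intro y
        have pt1 : (y + a) + a = y + (2 : ℤ) • a := by
          rw [show ((2 : ℤ)) • a = a + a from by rw [two_smul]]
          abel
        have pt2 : (y + a) - a = y := by abel
        have e1 := congrFun hta_h (y + a)
        have e2 := congrFun hta_c (y + a)
        simp only [ta] at e1 e2
        rw [pt1, pt2] at e1 e2
        rw [hqdef]
        simp only
        linear_combination e1 - e2
      obtain ⟨f, haf, hconv⟩ := exists_conv_eq_of_periodic ha q hqper (n + 1)
      refine ⟨fun y => g₁ y + f y, fun x => ((hg₁ x).union (haf x)).subset ?_, ?_⟩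
      · intro m hm
        simp only [Set.mem_setOf_eq] at hm
        simp only [Set.mem_union, Set.mem_setOf_eq]
        by_contra hc
        push_neg at hc
        exact hm (by rw [hc.1, hc.2, add_zero])
      · funext x
        rw [conv_add hg₁ haf _ x, hconv]
        rw [hqdef]
        simp only
        ring
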